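/- If x is a numeric pregame with birthday g(x) = 1 and y is a finite-born numeric pregame with birthday g(y) = m, then the birthday of their product is g(x·y) = m. -/

import Mathlib

universe u

namespace SetTheory

/-- Pre-games (removed from Mathlib; reproduced with the definitions of Mathlib of December 2024). -/
inductive PGame : Type (u + 1)
  | mk : ∀ α β : Type u, (α → PGame) → (β → PGame) → PGame

namespace PGame

/-- Simultaneous definition of `≤` (first component) and `⧏` (second component). -/
noncomputable def leLF : PGame.{u} → PGame.{u} → Prop × Prop
  | mk _ xr xL xR, y =>
    PGame.rec (motive := fun _ => Prop × Prop)
      (fun yl yr yL yR ihL ihR =>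
        ((∀ i, (leLF (xL i) (mk yl yr yL yR)).2) ∧ ∀ j, (ihR j).2,
         (∃ i, (ihL i).1) ∨ ∃ j : xr, (leLF (xR j) (mk yl yr yL yR)).1)) y

instance : LE PGame.{u} :=
  ⟨fun x y => (leLF x y).1⟩

instance : LT PGame.{u} :=
  ⟨fun x y => x ≤ y ∧ ¬y ≤ x⟩

def neg : PGame.{u} → PGame.{u}
  | ⟨l, r, L, R⟩ => ⟨r, l, fun i => neg (R i), fun i => neg (L i)⟩

instance : Neg PGame.{u} :=
  ⟨neg⟩

noncomputable instance : Add PGame.{u} :=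
  ⟨fun x y => by
    induction x generalizing y with | mk xl xr _ _ IHxl IHxr => _
    induction y with | mk yl yr yL yR IHyl IHyr => _
    have y := mk yl yr yL yR
    refine ⟨xl ⊕ yl, xr ⊕ yr, Sum.rec ?_ ?_, Sum.rec ?_ ?_⟩
    · exact fun i => IHxl i y
    · exact IHyl
    · exact fun i => IHxr i y
    · exact IHyr⟩

noncomputable instance : Sub PGame.{u} :=
  ⟨fun x y => x + -y⟩

noncomputable instance : Mul PGame.{u} :=
  ⟨fun x y => by
    induction x generalizing y with | mk xl xr _ _ IHxl IHxr => _
    induction y with | mk yl yr yL yR IHyl IHyr => _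
    have y := mk yl yr yL yR
    refine ⟨(xl × yl) ⊕ (xr × yr), (xl × yr) ⊕ (xr × yl), ?_, ?_⟩ <;> rintro (⟨i, j⟩ | ⟨i, j⟩)
    exacts [IHxl i y + IHyl j - IHxl i (yL j), IHxr i y + IHyr j - IHxr i (yR j),
      IHxl i y + IHyr j - IHxl i (yR j), IHxr i y + IHyl j - IHxr i (yL j)]⟩

def Numeric : PGame.{u} → Prop
  | ⟨_, _, L, R⟩ => (∀ i j, L i < R j) ∧ (∀ i, Numeric (L i)) ∧ ∀ j, Numeric (R j)

set_option linter.deprecated false in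
noncomputable def birthday : PGame.{u} → Ordinal.{u}
  | ⟨_, _, xL, xR⟩ =>
    max (Ordinal.lsub.{u, u} fun i => birthday (xL i)) (Ordinal.lsub.{u, u} fun i => birthday (xR i))

end PGame

end SetTheory

open SetTheory PGame Ordinal

namespace SetTheory.PGame

def LeftMoves : PGame.{u} → Type u
  | mk l _ _ _ => l

def RightMoves : PGame.{u} → Type u
  | mk _ r _ _ => r

def moveLeft : (g : PGame.{u}) → LeftMoves g → PGame.{u}
  | mk _ _ L _ => L

def moveRight : (g : PGame.{u}) → RightMoves g → PGame.{u}
  | mk _ _ _ R => R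

theorem birthday_def (x : PGame.{u}) : birthday x =
    max (lsub.{u, u} fun i => birthday (x.moveLeft i))
      (lsub.{u, u} fun i => birthday (x.moveRight i)) := by
  cases x
  rfl

theorem birthday_eq_zero {x : PGame.{u}} :
    birthday x = 0 ↔ IsEmpty x.LeftMoves ∧ IsEmpty x.RightMoves := by
  cases x with
  | mk xl xr xL xR =>
    rw [birthday, Ordinal.max_eq_zero, lsub_eq_zero_iff, lsub_eq_zero_iff]
    rfl

theorem leftMoves_mul (x y : PGame.{u}) :
    (x * y).LeftMoves = (x.LeftMoves × y.LeftMoves ⊕ x.RightMoves × y.RightMoves) := by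
  cases x; cases y; rfl

theorem rightMoves_mul (x y : PGame.{u}) :
    (x * y).RightMoves = (x.LeftMoves × y.RightMoves ⊕ x.RightMoves × y.LeftMoves) := by
  cases x; cases y; rfl

theorem Numeric.left_lt_right {xl xr : Type u} {xL : xl → PGame.{u}} {xR : xr → PGame.{u}}
    (h : Numeric (mk xl xr xL xR)) (i : xl) (j : xr) : xL i < xR j := by
  rw [Numeric] at h
  exact h.1 i j

theorem birthday_neg (x : PGame.{u}) : (-x).birthday = x.birthday := by
  induction x with
  | mk xl xr xL xR IHl IHr =>
    show (mk xr xl (fun j => -xR j) (fun i => -xL i)).birthday = _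
    rw [birthday, birthday, max_comm]
    simp only [IHl, IHr]

theorem birthday_add_zero_left {a : PGame.{u}} (ha : a.birthday = 0) (b : PGame.{u}) :
    (a + b).birthday = b.birthday := by
  obtain ⟨al, ar, aL, aR⟩ := a
  obtain ⟨hal, har⟩ := birthday_eq_zero.1 ha
  haveI : IsEmpty al := hal
  haveI : IsEmpty ar := har
  induction b with
  | mk bl br bL bR IHl IHr =>
    have e : mk al ar aL aR + mk bl br bL bR = mk (al ⊕ bl) (ar ⊕ br)
        (Sum.elim (fun i => aL i + mk bl br bL bR) (fun j => mk al ar aL aR + bL j))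
        (Sum.elim (fun i => aR i + mk bl br bL bR) (fun j => mk al ar aL aR + bR j)) := rfl
    rw [e, birthday, birthday, lsub_sum, lsub_sum]
    simp [IHl, IHr, lsub_empty, Ordinal.max_zero_left]

theorem birthday_add_zero_right {a : PGame.{u}} (ha : a.birthday = 0) (b : PGame.{u}) :
    (b + a).birthday = b.birthday := by
  obtain ⟨al, ar, aL, aR⟩ := a
  obtain ⟨hal, har⟩ := birthday_eq_zero.1 ha
  haveI : IsEmpty al := hal
  haveI : IsEmpty ar := har
  induction b with
  | mk bl br bL bR IHl IHr =>
    have e : mk bl br bL bR + mk al ar aL aR = mk (bl ⊕ al) (br ⊕ ar)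
        (Sum.elim (fun j => bL j + mk al ar aL aR) (fun i => mk bl br bL bR + aL i))
        (Sum.elim (fun j => bR j + mk al ar aL aR) (fun i => mk bl br bL bR + aR i)) := rfl
    rw [e, birthday, birthday, lsub_sum, lsub_sum]
    simp [IHl, IHr, lsub_empty, Ordinal.max_zero_right]

theorem birthday_sub_zero {a : PGame.{u}} (ha : a.birthday = 0) (b : PGame.{u}) :
    (b - a).birthday = b.birthday := by
  show (b + -a).birthday = _
  exact birthday_add_zero_right (by rw [birthday_neg]; exact ha) b

end SetTheory.PGame

private theorem birthday_mul_zero' {z : PGame} (hz : z.birthday = 0) (w : PGame) :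
    (z * w).birthday = 0 := by
  obtain ⟨hl, hr⟩ := PGame.birthday_eq_zero.1 hz
  rw [PGame.birthday_eq_zero]
  constructor
  · rw [leftMoves_mul]; exact instIsEmptySum
  · rw [rightMoves_mul]; exact instIsEmptySum

private theorem lsub_prod {α β : Type u} [Nonempty α] (g : β → Ordinal.{u}) :
    lsub (fun p : α × β => g p.2) = lsub g := by
  apply le_antisymm
  · exact lsub_le fun p => lt_lsub g p.2
  · exact lsub_le fun j => lt_lsub (fun p : α × β => g p.2) (Classical.arbitrary α, j)

private theorem aux_left (xl xr : Type u) (xL : xl → PGame) (xR : xr → PGame)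
    [Nonempty xl] [IsEmpty xr] (h0 : ∀ i, (xL i).birthday = 0) :
    ∀ y : PGame, ((PGame.mk xl xr xL xR) * y).birthday = y.birthday := by
  intro y
  induction y with
  | mk yl yr yL yR IHl IHr =>
    rw [birthday_def, birthday_def]
    have hL : ∀ p : xl × yl,
        ((PGame.mk xl xr xL xR * PGame.mk yl yr yL yR).moveLeft (Sum.inl p)).birthday
          = (yL p.2).birthday := by
      rintro ⟨i, j⟩
      show (xL i * PGame.mk yl yr yL yR + PGame.mk xl xr xL xR * yL j -
        xL i * yL j).birthday = _
      rw [birthday_sub_zero (birthday_mul_zero' (h0 i) _),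
        birthday_add_zero_left (birthday_mul_zero' (h0 i) _)]
      exact IHl j
    have hR : ∀ p : xl × yr,
        ((PGame.mk xl xr xL xR * PGame.mk yl yr yL yR).moveRight (Sum.inl p)).birthday
          = (yR p.2).birthday := by
      rintro ⟨i, j⟩
      show (xL i * PGame.mk yl yr yL yR + PGame.mk xl xr xL xR * yR j -
        xL i * yR j).birthday = _
      rw [birthday_sub_zero (birthday_mul_zero' (h0 i) _),
        birthday_add_zero_left (birthday_mul_zero' (h0 i) _)]
      exact IHr j
    congr 1
    · erw [lsub_sum]
      have h2 : (lsub fun b : xr × yr =>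
          ((PGame.mk xl xr xL xR * PGame.mk yl yr yL yR).moveLeft (Sum.inr b)).birthday) = 0 :=
        lsub_empty _
      rw [h2, max_zero_right]
      simp only [hL]
      exact lsub_prod fun j => (yL j).birthday
    · erw [lsub_sum]
      have h2 : (lsub fun b : xr × yl =>
          ((PGame.mk xl xr xL xR * PGame.mk yl yr yL yR).moveRight (Sum.inr b)).birthday) = 0 :=
        lsub_empty _
      rw [h2, max_zero_right]
      simp only [hR]
      exact lsub_prod fun j => (yR j).birthday

private theorem aux_right (xl xr : Type u) (xL : xl → PGame) (xR : xr → PGame)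
    [IsEmpty xl] [Nonempty xr] (h0 : ∀ i, (xR i).birthday = 0) :
    ∀ y : PGame, ((PGame.mk xl xr xL xR) * y).birthday = y.birthday := by
  intro y
  induction y with
  | mk yl yr yL yR IHl IHr =>
    have hL : ∀ p : xr × yr,
        ((PGame.mk xl xr xL xR * PGame.mk yl yr yL yR).moveLeft (Sum.inr p)).birthday
          = (yR p.2).birthday := by
      rintro ⟨i, j⟩
      show (xR i * PGame.mk yl yr yL yR + PGame.mk xl xr xL xR * yR j -
        xR i * yR j).birthday = _
      rw [birthday_sub_zero (birthday_mul_zero' (h0 i) _),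
        birthday_add_zero_left (birthday_mul_zero' (h0 i) _)]
      exact IHr j
    have hR : ∀ p : xr × yl,
        ((PGame.mk xl xr xL xR * PGame.mk yl yr yL yR).moveRight (Sum.inr p)).birthday
          = (yL p.2).birthday := by
      rintro ⟨i, j⟩
      show (xR i * PGame.mk yl yr yL yR + PGame.mk xl xr xL xR * yL j -
        xR i * yL j).birthday = _
      rw [birthday_sub_zero (birthday_mul_zero' (h0 i) _),
        birthday_add_zero_left (birthday_mul_zero' (h0 i) _)]
      exact IHl j
    rw [birthday_def, birthday_def,
      max_comm (lsub fun i => birthday ((PGame.mk yl yr yL yR).moveLeft i))]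
    congr 1
    · erw [lsub_sum]
      have h2 : (lsub fun b : xl × yl =>
          ((PGame.mk xl xr xL xR * PGame.mk yl yr yL yR).moveLeft (Sum.inl b)).birthday) = 0 :=
        lsub_empty _
      rw [h2, max_zero_left]
      simp only [hL]
      exact lsub_prod fun j => (yR j).birthday
    · erw [lsub_sum]
      have h2 : (lsub fun b : xl × yr =>
          ((PGame.mk xl xr xL xR * PGame.mk yl yr yL yR).moveRight (Sum.inl b)).birthday) = 0 :=
        lsub_empty _
      rw [h2, max_zero_left]
      simp only [hR]
      exact lsub_prod fun j => (yL j).birthday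

private theorem birthday_zero_le {a b : PGame} (ha : a.birthday = 0) (hb : b.birthday = 0) :
    a ≤ b := by
  obtain ⟨hal, har⟩ := PGame.birthday_eq_zero.1 ha
  obtain ⟨hbl, hbr⟩ := PGame.birthday_eq_zero.1 hb
  obtain ⟨al, ar, aL, aR⟩ := a
  obtain ⟨bl, br, bL, bR⟩ := b
  show (leLF _ _).1
  constructor
  · intro i; exact (hal.false i).elim
  · intro j; exact (hbr.false j).elim

theorem birthday_mul_of_birthday_one (x y : PGame) (hx : x.Numeric) (hy : y.Numeric)
    (hx1 : x.birthday = 1) (m : ℕ) (hym : y.birthday = (m : Ordinal)) :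
    (x * y).birthday = (m : Ordinal) := by
  rw [← hym]
  obtain ⟨xl, xr, xL, xR⟩ := x
  rw [PGame.birthday] at hx1
  have hxL : ∀ i, (xL i).birthday = 0 := by
    intro i
    have : (xL i).birthday < 1 := by
      rw [← hx1]; exact lt_max_of_lt_left (lt_lsub _ i)
    rwa [Ordinal.lt_one_iff_zero] at this
  have hxR : ∀ i, (xR i).birthday = 0 := by
    intro i
    have : (xR i).birthday < 1 := by
      rw [← hx1]; exact lt_max_of_lt_right (lt_lsub _ i)
    rwa [Ordinal.lt_one_iff_zero] at this
  -- not both xl and xr nonempty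
  have hne : IsEmpty xl ∨ IsEmpty xr := by
    by_contra h
    push_neg at h
    obtain ⟨⟨i⟩, ⟨j⟩⟩ := h
    have h1 : xL i < xR j := hx.left_lt_right i j
    exact (show xL i ≤ xR j ∧ ¬ xR j ≤ xL i from h1).2 (birthday_zero_le (hxR j) (hxL i))
  -- not both empty
  have hone : ¬ (IsEmpty xl ∧ IsEmpty xr) := by
    rintro ⟨h1, h2⟩
    have : (PGame.mk xl xr xL xR).birthday = 0 := by
      rw [PGame.birthday_eq_zero]; exact ⟨h1, h2⟩
    rw [PGame.birthday] at this
    rw [this] at hx1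
    exact zero_ne_one hx1
  rcases hne with he | he
  · -- left empty, right nonempty: use negation
    have hnr : Nonempty xr := by
      rcases isEmpty_or_nonempty xr with h | h
      · exact absurd ⟨he, h⟩ hone
      · exact h
    exact aux_right xl xr xL xR hxR y
  · have hnl : Nonempty xl := by
      rcases isEmpty_or_nonempty xl with h | h
      · exact absurd ⟨h, he⟩ hone
      · exact h
    exact aux_left xl xr xL xR hxL y
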